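/- (Theorem 3.2, endemic equilibrium) Let λ, β, γ, μ, r, δ > 0 and let f : ℝ → ℝ satisfy assumptions (A1)–(A3). If the reproduction number R₀ = β·λ·f'(0)/(γ·(μ+r)) > 1, then there exists a unique I* ∈ (0, λ/(μ+r)) such that β·((λ − (μ+r)·I*)/γ)·f(I*) = (μ+r)·I*. Consequently, setting S* = (λ − (μ+r)·I*)/γ and R* = r·I*/δ, the triple (S*, I*, R*) is the unique positive solution of the equilibrium equations λ − β S* f(I*) − γ S* = 0, β S* f(I*) − (μ+r) I* = 0, r I* − δ R* = 0. -/

import Mathlib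

open Filter Finset Topology

/-- L1-scheme coefficient `b_j^{(β)} = (j+1)^β - j^β` (real powers). -/
noncomputable def bcoef (β : ℝ) (j : ℕ) : ℝ := ((j : ℝ) + 1) ^ β - (j : ℝ) ^ β

/-- L1 discretization of the Caputo derivative of order `α` with time step `Δt`,
evaluated at time level `n ≥ 1`:
`δ_n^α f = ((Δt)^{-α}/Γ(2-α)) (f n - b_{n-1} f 0 - Σ_{j=1}^{n-1} (b_{j-1}-b_j) f (n-j))`. -/
noncomputable def L1 (α Δt : ℝ) (f : ℕ → ℝ) (n : ℕ) : ℝ :=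
  Δt ^ (-α) / Real.Gamma (2 - α) *
    (f n - bcoef (1 - α) (n - 1) * f 0 -
      ∑ j ∈ Finset.Icc 1 (n - 1), (bcoef (1 - α) (j - 1) - bcoef (1 - α) j) * f (n - j))

set_option maxHeartbeats 1600000 in
/-- Theorem 3.2, existence and uniqueness of the endemic equilibrium
when `R₀ > 1`. `f'` denotes the derivative of the incidence function on `[0,∞)`. -/
theorem stmt_13 (lam β γ μ r δ : ℝ)
    (hlam : 0 < lam) (hβ : 0 < β) (hγ : 0 < γ) (hμ : 0 < μ) (hr : 0 < r) (hδ : 0 < δ)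
    (f f' : ℝ → ℝ)
    (hderiv : ∀ x ∈ Set.Ici (0 : ℝ), HasDerivWithinAt f (f' x) (Set.Ici 0) x)
    (hf'cont : ContinuousOn f' (Set.Ici 0))
    (hA1 : f 0 = 0 ∧ ∀ y : ℝ, 0 < y → 0 < f y)
    (hA2 : (∀ y : ℝ, 0 ≤ y → 0 < f' y) ∧ AntitoneOn (fun y => f y / y) (Set.Ioi 0))
    (hA3 : ∀ y : ℝ, 0 ≤ y → f y ≤ y * f' 0)
    (hR0 : 1 < β * lam * f' 0 / (γ * (μ + r))) :
    ∃ Istar : ℝ, Istar ∈ Set.Ioo 0 (lam / (μ + r)) ∧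
      β * ((lam - (μ + r) * Istar) / γ) * f Istar = (μ + r) * Istar ∧
      (∀ J ∈ Set.Ioo 0 (lam / (μ + r)),
        β * ((lam - (μ + r) * J) / γ) * f J = (μ + r) * J → J = Istar) ∧
      (lam - β * ((lam - (μ + r) * Istar) / γ) * f Istar -
          γ * ((lam - (μ + r) * Istar) / γ) = 0 ∧
        β * ((lam - (μ + r) * Istar) / γ) * f Istar - (μ + r) * Istar = 0 ∧
        r * Istar - δ * (r * Istar / δ) = 0) ∧
      ∀ S' I' R' : ℝ, 0 < S' → 0 < I' → 0 < R' →
        lam - β * S' * f I' - γ * S' = 0 → β * S' * f I' - (μ + r) * I' = 0 →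
        r * I' - δ * R' = 0 →
        S' = (lam - (μ + r) * Istar) / γ ∧ I' = Istar ∧ R' = r * Istar / δ := by
  obtain ⟨hf0, hfpos⟩ := hA1
  obtain ⟨hf'pos, hmono⟩ := hA2
  have hc0 : 0 < μ + r := by linarith
  set c := μ + r with hc
  set M := lam / c with hMdef
  have hγ' : γ ≠ 0 := ne_of_gt hγ
  have hM0 : 0 < M := div_pos hlam hc0
  have hcM : c * M = lam := by rw [hMdef]; field_simp [hc0.ne']
  have hfc : ContinuousOn f (Set.Ici 0) := fun x hx => (hderiv x hx).continuousWithinAt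
  -- key: two solutions in (0,M) coincide
  have keylt : ∀ I₁ I₂ : ℝ, I₁ ∈ Set.Ioo 0 M → I₂ ∈ Set.Ioo 0 M → I₁ < I₂ →
      β * ((lam - c * I₁) / γ) * f I₁ = c * I₁ →
      β * ((lam - c * I₂) / γ) * f I₂ = c * I₂ → False := by
    rintro I₁ I₂ ⟨h10, h1M⟩ ⟨h20, h2M⟩ hlt e1 e2
    have hl1 : 0 < lam - c * I₁ := by
      have := (lt_div_iff₀ hc0).mp h1M; nlinarith
    have hl2 : 0 < lam - c * I₂ := by
      have := (lt_div_iff₀ hc0).mp h2M; nlinarith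
    have hcross : f I₂ * I₁ ≤ f I₁ * I₂ := by
      have h := hmono (Set.mem_Ioi.mpr h10) (Set.mem_Ioi.mpr h20) hlt.le
      simp only at h
      rw [div_le_div_iff₀ h20 h10] at h
      linarith
    have q1 : β * (lam - c * I₁) * f I₁ * I₂ = γ * c * I₁ * I₂ := by
      field_simp at e1; linear_combination I₂ * e1
    have q2 : β * (lam - c * I₂) * f I₂ * I₁ = γ * c * I₁ * I₂ := by
      field_simp at e2; linear_combination I₁ * e2
    have hP : 0 < f I₁ := hfpos _ h10
    have h3 : β * (lam - c * I₂) * (f I₂ * I₁) ≤ β * (lam - c * I₂) * (f I₁ * I₂) :=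
      mul_le_mul_of_nonneg_left hcross (by positivity)
    have h4 : β * (lam - c * I₂) * (f I₁ * I₂) < β * (lam - c * I₁) * (f I₁ * I₂) := by
      have : lam - c * I₂ < lam - c * I₁ := by nlinarith
      have hpos : 0 < f I₁ * I₂ := mul_pos hP h20
      exact mul_lt_mul_of_pos_right (mul_lt_mul_of_pos_left this hβ) hpos
    have h5 : β * (lam - c * I₂) * (f I₂ * I₁) = γ * c * I₁ * I₂ := by linear_combination q2
    have h6 : β * (lam - c * I₁) * (f I₁ * I₂) = γ * c * I₁ * I₂ := by linear_combination q1
    linarith [h3, h4, h5, h6]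
  -- slope limit at 0
  have hslope : Tendsto (fun I => f I / I) (𝓝[>] (0:ℝ)) (𝓝 (f' 0)) := by
    have h := hderiv 0 Set.self_mem_Ici
    rw [hasDerivWithinAt_iff_tendsto_slope] at h
    have hs : Set.Ici (0:ℝ) \ {0} = Set.Ioi 0 := by
      ext x; simp [lt_iff_le_and_ne, eq_comm]
    rw [hs] at h
    exact h.congr fun x => by rw [slope_def_field, hf0, sub_zero, sub_zero]
  have hcontA : Continuous fun I : ℝ => β * ((lam - c * I) / γ) := by fun_prop
  have htend : Tendsto (fun I => β * ((lam - c * I) / γ) * (f I / I)) (𝓝[>] (0:ℝ))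
      (𝓝 (β * ((lam - c * 0) / γ) * f' 0)) :=
    ((hcontA.tendsto 0).mono_left nhdsWithin_le_nhds).mul hslope
  have hcL : c < β * ((lam - c * 0) / γ) * f' 0 := by
    rw [lt_div_iff₀ (by positivity)] at hR0
    rw [mul_zero, sub_zero]
    rw [show β * (lam / γ) * f' 0 = β * lam * f' 0 / γ by ring, lt_div_iff₀ hγ]
    nlinarith
  have hev1 := htend.eventually (eventually_gt_nhds hcL)
  have hev2 : ∀ᶠ I in 𝓝[>] (0:ℝ), I ∈ Set.Ioo 0 M :=
    eventually_of_mem (Ioo_mem_nhdsGT_of_mem ⟨le_refl 0, hM0⟩) fun x hx => hx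
  obtain ⟨I₀, hI₀h, hI₀mem⟩ := (hev1.and hev2).exists
  have hI₀0 : 0 < I₀ := hI₀mem.1
  have hI₀M : I₀ < M := hI₀mem.2
  -- g I₀ > 0
  have hgI₀ : 0 < β * ((lam - c * I₀) / γ) * f I₀ - c * I₀ := by
    have h1 := mul_lt_mul_of_pos_right hI₀h hI₀0
    have h2 : β * ((lam - c * I₀) / γ) * (f I₀ / I₀) * I₀
        = β * ((lam - c * I₀) / γ) * f I₀ := by
      field_simp
    linarith [h1, h2]
  have hgM : β * ((lam - c * M) / γ) * f M - c * M = -lam := by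
    have h0 : lam - c * M = 0 := by linarith
    rw [h0, hcM]; simp
  have hgc : ContinuousOn (fun I => β * ((lam - c * I) / γ) * f I - c * I)
      (Set.Icc I₀ M) := by
    apply ContinuousOn.sub
    · exact (hcontA.continuousOn).mul
        (hfc.mono fun x hx => le_trans hI₀0.le hx.1)
    · fun_prop
  have h0mem : (0:ℝ) ∈ Set.Ioo (β * ((lam - c * M) / γ) * f M - c * M)
      (β * ((lam - c * I₀) / γ) * f I₀ - c * I₀) := ⟨by rw [hgM]; linarith, hgI₀⟩
  obtain ⟨Istar, hIsmem, hgIs⟩ := intermediate_value_Ioo' hI₀M.le hgc h0mem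
  simp only at hgIs
  have hIsIoo : Istar ∈ Set.Ioo 0 M := ⟨lt_trans hI₀0 hIsmem.1, hIsmem.2⟩
  have heqn : β * ((lam - c * Istar) / γ) * f Istar = c * Istar := by linarith
  have huniq : ∀ J ∈ Set.Ioo 0 M,
      β * ((lam - c * J) / γ) * f J = c * J → J = Istar := by
    intro J hJ hJeq
    rcases lt_trichotomy J Istar with h | h | h
    · exact absurd (keylt J Istar hJ hIsIoo h hJeq heqn) (by simp)
    · exact h
    · exact absurd (keylt Istar J hIsIoo hJ h heqn hJeq) (by simp)
  refine ⟨Istar, hIsIoo, heqn, huniq, ⟨?_, by rw [heqn, sub_self], by field_simp; ring⟩, ?_⟩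
  · rw [heqn]; field_simp; ring
  · intro S' I' R' hS hI hR e1 e2 e3
    have hlS : lam - c * I' = γ * S' := by linarith
    have hS'eq : S' = (lam - c * I') / γ := by rw [hlS]; field_simp
    have hI'M : I' < M := by
      rw [hMdef, lt_div_iff₀ hc0]
      linarith [mul_pos hγ hS]
    have hI'eq : β * ((lam - c * I') / γ) * f I' = c * I' := by
      rw [← hS'eq]; linarith
    have hII : I' = Istar := huniq I' ⟨hI, hI'M⟩ hI'eq
    refine ⟨by rw [← hII]; exact hS'eq, hII, ?_⟩
    rw [← hII, eq_div_iff (ne_of_gt hδ)]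
    linarith
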